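/- Let n > 2. If (x,n-1) is irreducible in S_Γ^s and (x-s,n) ∈ S_Γ^s, then (x-s,n) is irreducible in S_Γ^s. -/
import Mathlib


/-- The Leamer monoid as a subset of ℕ × ℕ: (0,0) together with all (x,n), n ≥ 1,
such that x + i*s ∈ Γ for all 0 ≤ i ≤ n. -/
def Leamer (Γ : AddSubmonoid ℕ) (s : ℕ) : Set (ℕ × ℕ) :=
  {p | p = (0, 0) ∨ (1 ≤ p.2 ∧ ∀ i ≤ p.2, p.1 + i * s ∈ Γ)}

/-- An irreducible (atom) of a subset S of ℕ × ℕ: a nonzero element of S that is not the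
sum of two nonzero elements of S. -/
def LIrred (S : Set (ℕ × ℕ)) (z : ℕ × ℕ) : Prop :=
  z ∈ S ∧ z ≠ 0 ∧ ∀ a b : ℕ × ℕ, a ∈ S → b ∈ S → a ≠ 0 → b ≠ 0 → z ≠ a + b

/-- A reducible element of S: an element of S that is the sum of two nonzero elements of S. -/
def LReducible (S : Set (ℕ × ℕ)) (z : ℕ × ℕ) : Prop :=
  z ∈ S ∧ ∃ a b : ℕ × ℕ, a ∈ S ∧ b ∈ S ∧ a ≠ 0 ∧ b ≠ 0 ∧ z = a + b

/-- The set of factorization lengths of z into irreducibles of S. -/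
def LSet (S : Set (ℕ × ℕ)) (z : ℕ × ℕ) : Set ℕ :=
  {r | ∃ l : Multiset (ℕ × ℕ), Multiset.card l = r ∧ (∀ a ∈ l, LIrred S a) ∧ l.sum = z}

/-- The Delta set of z: differences of successive factorization lengths. -/
def LDelta (S : Set (ℕ × ℕ)) (z : ℕ × ℕ) : Set ℕ :=
  {d | ∃ a b, a ∈ LSet S z ∧ b ∈ LSet S z ∧ a < b ∧
    (∀ c, a < c → c < b → c ∉ LSet S z) ∧ d = b - a}

/-- The Delta set of the monoid S. -/
def LDeltaMonoid (S : Set (ℕ × ℕ)) : Set ℕ :=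
  {d | ∃ z, z ∈ S ∧ z ≠ 0 ∧ d ∈ LDelta S z}

/-- The Frobenius number of a numerical monoid Γ. -/
noncomputable def Frob (Γ : AddSubmonoid ℕ) : ℕ := sSup {x | x ∉ Γ}

/-- The numerical monoid generated by the arithmetic sequence m, m+s, ..., m+ks. -/
def ArithGamma (m k s : ℕ) : AddSubmonoid ℕ :=
  AddSubmonoid.closure {v | ∃ j ≤ k, v = m + j * s}

theorem stmt5 (Γ : AddSubmonoid ℕ) (hΓ : {x : ℕ | x ∉ Γ}.Finite) (s : ℕ) (hs : s ∉ Γ)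
    (x n : ℕ) (hsx : s ≤ x) (hn : 2 < n) (h1 : LIrred (Leamer Γ s) (x, n - 1))
    (h2 : (x - s, n) ∈ Leamer Γ s) : LIrred (Leamer Γ s) (x - s, n) := by
  refine ⟨h2, by simp [Prod.ext_iff]; omega, ?_⟩
  intro a b ha hb ha0 hb0 heq
  have ha' := ha.resolve_left (fun h => ha0 (by simpa [Prod.ext_iff] using h))
  have hb' := hb.resolve_left (fun h => hb0 (by simpa [Prod.ext_iff] using h))
  obtain ⟨ha2, haΓ⟩ := ha'
  obtain ⟨hb2, hbΓ⟩ := hb'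
  have hx1 : x - s = a.1 + b.1 := by
    have := congrArg Prod.fst heq; simpa using this
  have hx2 : n = a.2 + b.2 := by
    have := congrArg Prod.snd heq; simpa using this
  rcases le_or_gt a.2 1 with hca | hca
  · -- then b.2 ≥ 2, shift b
    have hb2' : 2 ≤ b.2 := by omega
    refine h1.2.2 a (b.1 + s, b.2 - 1) ha ?_ ha0 ?_ ?_
    · refine Or.inr ⟨by omega, fun i hi => ?_⟩
      have h := hbΓ (i + 1) (by omega)
      have e : b.1 + s + i * s = b.1 + (i + 1) * s := by ring
      rw [e]; exact h
    · simp [Prod.ext_iff]; omega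
    · have : (x, n - 1) = (a.1 + (b.1 + s), a.2 + (b.2 - 1)) := by
        simp [Prod.ext_iff]; omega
      rw [this]; rfl
  · refine h1.2.2 (a.1 + s, a.2 - 1) b ?_ hb ?_ hb0 ?_
    · refine Or.inr ⟨by omega, fun i hi => ?_⟩
      have h := haΓ (i + 1) (by omega)
      have e : a.1 + s + i * s = a.1 + (i + 1) * s := by ring
      rw [e]; exact h
    · simp [Prod.ext_iff]; omega
    · have : (x, n - 1) = (a.1 + s + b.1, a.2 - 1 + b.2) := by
        simp [Prod.ext_iff]; omega
      rw [this]; rfl
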